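/- Let λ be an unrefinable partition satisfying the complement property with respect to λ_t = 2n−4 (for x ≠ n−2: x ∈ λ iff λ_t − x ∉ λ; n−2 ∉ λ), having n−2 parts and n−2 missing parts, with associated Young diagram Y = KN(S_λ) and z the index with h_{1,z+1} = n−2. Then: (i) for 0 ≤ i ≤ z−1, h_{i+1,1} = h_{1,i+1}; and (ii) for z+1 ≤ i ≤ n−2, h_{1,i+1} = h_{i,1}. -/

import Mathlib

/-- A partition into distinct parts, encoded as a `Finset ℕ` of its parts, is *refinable*
if some part can be replaced by two or more distinct positive integers, none of which is
already a part, summing to it. -/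
def Refinable (P : Finset ℕ) : Prop :=
  ∃ a ∈ P, ∃ B : Finset ℕ, 2 ≤ B.card ∧ (∀ b ∈ B, 0 < b ∧ b ∉ P) ∧ B.sum id = a

/-- The `i`-th largest element (0-based) of `P`. -/
def partDesc (P : Finset ℕ) (i : ℕ) : ℕ := ((P.sort (· ≤ ·)).reverse).getD i 0

/-- Length of the `i`-th row (0-based) of the Young diagram obtained from the numerical
set `ℕ \ P` via the Keith–Nath transformation: the number of east steps (elements of the
numerical set) preceding the north step at the `i`-th largest gap. -/
def knRow (P : Finset ℕ) (i : ℕ) : ℕ :=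
  ((Finset.range (partDesc P i)).filter (fun s => s ∉ P)).card

/-- Length of the `j`-th column (0-based) of the Keith–Nath Young diagram. -/
def knCol (P : Finset ℕ) (j : ℕ) : ℕ :=
  ((Finset.range P.card).filter (fun i => j < knRow P i)).card

/-- Hook length of the cell `(i, j)` (0-based) of the Keith–Nath Young diagram:
arm + leg + 1. -/
def knHook (P : Finset ℕ) (i j : ℕ) : ℕ := knRow P i + knCol P j - i - j - 1

/-- Total number of cells of the Keith–Nath Young diagram. -/
def knCells (P : Finset ℕ) : ℕ := ∑ i ∈ Finset.range P.card, knRow P i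

section Aux

variable {P : Finset ℕ}

lemma kn_sorted : List.Pairwise (· > ·) ((P.sort (· ≤ ·)).reverse) := by
  exact List.pairwise_reverse.mpr P.sortedLT_sort.pairwise

lemma kn_length : ((P.sort (· ≤ ·)).reverse).length = P.card := by
  simp [Finset.length_sort]

lemma partDesc_mem {i : ℕ} (hi : i < P.card) : partDesc P i ∈ P := by
  have hl : i < ((P.sort (· ≤ ·)).reverse).length := by rw [kn_length]; exact hi
  rw [partDesc, List.getD_eq_getElem _ _ hl]
  have := List.getElem_mem hl
  rw [List.mem_reverse, Finset.mem_sort] at this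
  exact this

lemma partDesc_rank {i : ℕ} (hi : i < P.card) :
    (P.filter (fun q => partDesc P i < q)).card = i := by
  set r := (P.sort (· ≤ ·)).reverse with hr
  have hl : i < r.length := by rw [kn_length]; exact hi
  have hnd : r.Nodup := by
    rw [hr, List.nodup_reverse]; exact P.sort_nodup _
  have hpw : ∀ (a b : ℕ) (ha : a < r.length) (hb : b < r.length), a < b → r[b] < r[a] := by
    intro a b ha hb hab
    exact List.pairwise_iff_getElem.mp (kn_sorted (P := P)) a b ha hb hab
  have hmemP : ∀ q, q ∈ P ↔ q ∈ r := by
    intro q; rw [hr, List.mem_reverse, Finset.mem_sort]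
  have hset : P.filter (fun q => partDesc P i < q) = (r.take i).toFinset := by
    ext q
    simp only [Finset.mem_filter, List.mem_toFinset]
    constructor
    · rintro ⟨hq, hlt⟩
      rw [hmemP] at hq
      obtain ⟨k, hk, rfl⟩ := List.mem_iff_getElem.mp hq
      have hki : k < i := by
        by_contra hge
        push_neg at hge
        rcases eq_or_lt_of_le hge with h | h
        · subst h
          rw [partDesc, List.getD_eq_getElem _ _ hl] at hlt
          exact lt_irrefl _ hlt
        · have := hpw i k hl hk h
          rw [partDesc, List.getD_eq_getElem _ _ hl] at hlt
          omega
      have htk : k < (r.take i).length := by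
        rw [List.length_take]; omega
      have : (r.take i)[k] = r[k] := List.getElem_take ..
      rw [← this]
      exact List.getElem_mem htk
    · intro hq
      obtain ⟨k, hk, hkq⟩ := List.mem_iff_getElem.mp hq
      have hki : k < i := by
        have := hk; rw [List.length_take] at this; omega
      have hkr : k < r.length := by omega
      have : (r.take i)[k]'hk = r[k] := List.getElem_take ..
      rw [this] at hkq
      constructor
      · rw [hmemP, ← hkq]; exact List.getElem_mem hkr
      · rw [partDesc, List.getD_eq_getElem _ _ hl, ← hkq]
        exact hpw k i hkr hl hki
  rw [hset]
  have : (r.take i).toFinset.card = (r.take i).length :=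
    List.toFinset_card_of_nodup ((List.take_sublist i r).nodup hnd)
  rw [this, List.length_take]
  omega

lemma rank_lt {t : ℕ} (ht : t ∈ P) : (P.filter (fun q => t < q)).card < P.card := by
  have hsub : P.filter (fun q => t < q) ⊆ P.erase t := by
    intro q hq
    rw [Finset.mem_filter] at hq
    exact Finset.mem_erase.mpr ⟨by omega, hq.1⟩
  calc (P.filter (fun q => t < q)).card ≤ (P.erase t).card := Finset.card_le_card hsub
    _ < P.card := Finset.card_erase_lt_of_mem ht

lemma rank_injOn {t u : ℕ} (ht : t ∈ P) (hu : u ∈ P)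
    (h : (P.filter (fun q => t < q)).card = (P.filter (fun q => u < q)).card) : t = u := by
  have key : ∀ a b : ℕ, a ∈ P → b ∈ P → a < b →
      (P.filter (fun q => b < q)).card < (P.filter (fun q => a < q)).card := by
    intro a b ha hb hab
    have hsub : insert b (P.filter (fun q => b < q)) ⊆ P.filter (fun q => a < q) := by
      intro q hq
      rcases Finset.mem_insert.mp hq with rfl | hq
      · exact Finset.mem_filter.mpr ⟨hb, hab⟩
      · rw [Finset.mem_filter] at hq ⊢
        exact ⟨hq.1, by omega⟩
    have hb' : b ∉ P.filter (fun q => b < q) := by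
      simp [Finset.mem_filter]
    calc (P.filter (fun q => b < q)).card
        < (insert b (P.filter (fun q => b < q))).card := by
          rw [Finset.card_insert_of_notMem hb']; omega
      _ ≤ (P.filter (fun q => a < q)).card := Finset.card_le_card hsub
  rcases lt_trichotomy t u with hlt | heq | hlt
  · have := key t u ht hu hlt; omega
  · exact heq
  · have := key u t hu ht hlt; omega

lemma partDesc_eq {t i : ℕ} (ht : t ∈ P) (hr : (P.filter (fun q => t < q)).card = i) :
    partDesc P i = t := by
  have hi : i < P.card := hr ▸ rank_lt ht
  exact rank_injOn (partDesc_mem hi) ht (by rw [partDesc_rank hi, ← hr])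

end Aux

/-- Quasi-symmetry between the first row and first column of the Keith–Nath Young
diagram of a maximal unrefinable partition with largest part `2n - 4` satisfying the
complement property: (0-based) `h_{i,0} = h_{0,i}` for `i < z`, and
`h_{0,i} = h_{i-1,0}` for `z + 1 ≤ i ≤ n - 2`, where `h_{0,z} = n - 2`. -/

theorem stmt11 (P : Finset ℕ) (n z : ℕ) (hn : 6 ≤ n)
    (hne : P.Nonempty) (hpos : ∀ p ∈ P, 0 < p) (hunref : ¬ Refinable P)
    (hmax : P.max' hne = 2 * n - 4) (hcard : P.card = n - 2)
    (hmiss : ((Finset.Icc 1 (P.max' hne)) \ P).card = n - 2)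
    (hnmem : n - 2 ∉ P)
    (hcompl : ∀ x : ℕ, 0 < x → x ≤ 2 * n - 4 → x ≠ n - 2 →
      (x ∈ P ↔ 2 * n - 4 - x ∉ P))
    (hz1 : 1 ≤ z) (hz2 : z ≤ n - 2) (hz : knHook P 0 z = n - 2) :
    (∀ i : ℕ, i < z → knHook P i 0 = knHook P 0 i) ∧
    (∀ i : ℕ, z + 1 ≤ i → i ≤ n - 2 → knHook P 0 i = knHook P (i - 1) 0) := by
  classical
  set m := 2 * n - 4 with hm_def
  -- basic facts
  have h0P : (0 : ℕ) ∉ P := fun h => absurd (hpos 0 h) (lt_irrefl 0)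
  have hleM : ∀ q ∈ P, q ≤ m := fun q hq => hmax ▸ P.le_max' q hq
  have hmP : m ∈ P := hmax ▸ P.max'_mem hne
  have hinf : (setOf fun k => k ∉ P).Infinite := by
    have := P.finite_toSet.infinite_compl
    convert this using 1
    ext k; exact Iff.rfl
  -- notation for the enumeration of non-parts
  set s : ℕ → ℕ := Nat.nth (fun k => k ∉ P) with hs_def
  have hcount_nth : ∀ j, Nat.count (fun k => k ∉ P) (s j) = j :=
    fun j => Nat.count_nth_of_infinite hinf j
  have hs_mem : ∀ j, s j ∉ P := fun j => Nat.nth_mem_of_infinite hinf j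
  have hs_mono : ∀ {a b : ℕ}, a < b → s a < s b :=
    fun {a b} h => (Nat.nth_lt_nth hinf).mpr h
  -- count p x + #(parts < x) = x
  have hcnt : ∀ x : ℕ, Nat.count (fun k => k ∉ P) x + (P.filter (fun q => q < x)).card = x := by
    intro x
    rw [Nat.count_eq_card_filter_range]
    have heq : (Finset.range x).filter (fun k => ¬ k ∉ P) = P.filter (fun q => q < x) := by
      ext k
      simp only [Finset.mem_filter, Finset.mem_range, not_not]
      tauto
    have := Finset.card_filter_add_card_filter_not
      (s := Finset.range x) (p := fun k => k ∉ P)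
    rw [heq] at this
    rw [this, Finset.card_range]
  -- splitting P at a member t
  have hsplit : ∀ t ∈ P, (P.filter (fun q => q < t)).card + (P.filter (fun q => t < q)).card + 1
      = P.card := by
    intro t ht
    have h1 := Finset.card_filter_add_card_filter_not
      (s := P) (p := fun q => q < t)
    have h2 : P.filter (fun q => ¬ q < t) = insert t (P.filter (fun q => t < q)) := by
      ext q
      simp only [Finset.mem_filter, Finset.mem_insert, not_lt]
      constructor
      · rintro ⟨hq, hle⟩
        rcases eq_or_lt_of_le hle with h | h
        · exact Or.inl h.symm
        · exact Or.inr ⟨hq, h⟩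
      · rintro (rfl | ⟨hq, h⟩)
        · exact ⟨ht, le_refl _⟩
        · exact ⟨hq, le_of_lt h⟩
    have h3 : t ∉ P.filter (fun q => t < q) := by simp
    rw [h2, Finset.card_insert_of_notMem h3] at h1
    omega
  -- knRow as count
  have hrow : ∀ i, knRow P i = Nat.count (fun k => k ∉ P) (partDesc P i) := by
    intro i
    rw [knRow, Nat.count_eq_card_filter_range]
  -- knCol 0 = card P
  have hcol0 : knCol P 0 = P.card := by
    rw [knCol]
    have : (Finset.range P.card).filter (fun i => 0 < knRow P i) = Finset.range P.card := by
      apply Finset.filter_true_of_mem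
      intro i hi
      rw [Finset.mem_range] at hi
      have hpd := partDesc_mem hi
      have : (0 : ℕ) ∈ (Finset.range (partDesc P i)).filter (fun k => k ∉ P) := by
        simp only [Finset.mem_filter, Finset.mem_range]
        exact ⟨hpos _ hpd, h0P⟩
      rw [knRow]
      exact Finset.card_pos.mpr ⟨0, this⟩
    rw [this, Finset.card_range]
  -- first-column hooks are the parts
  have hook_col : ∀ i, i < P.card → knHook P i 0 = partDesc P i := by
    intro i hi
    have hB := hcnt (partDesc P i)
    have hC := hsplit _ (partDesc_mem hi)
    rw [partDesc_rank hi] at hC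
    rw [knHook, hcol0, hrow]
    omega
  -- partDesc P 0 = m
  have hpd0 : partDesc P 0 = m := by
    apply partDesc_eq hmP
    rw [Finset.card_eq_zero]
    apply Finset.filter_false_of_mem
    intro q hq
    have := hleM q hq
    omega
  -- count of non-parts below m
  have hcountm : Nat.count (fun k => k ∉ P) m = n - 1 := by
    have h1 := hcnt m
    have h2 : P.filter (fun q => q < m) = P.erase m := by
      ext q
      simp only [Finset.mem_filter, Finset.mem_erase]
      constructor
      · rintro ⟨hq, hlt⟩; exact ⟨by omega, hq⟩
      · rintro ⟨hne', hq⟩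
        exact ⟨hq, lt_of_le_of_ne (hleM q hq) hne'⟩
    rw [h2, Finset.card_erase_of_mem hmP, hcard] at h1
    omega
  -- knCol via nth
  have hcol : ∀ j, knCol P j = (P.filter (fun q => s j < q)).card := by
    intro j
    rw [knCol]
    have hstep : (Finset.range P.card).filter (fun i => j < knRow P i)
        = (Finset.range P.card).filter (fun i => s j < partDesc P i) := by
      apply Finset.filter_congr
      intro i _
      rw [hrow]
      constructor
      · intro h
        exact Nat.nth_lt_of_lt_count h
      · intro h
        have h1 : Nat.count (fun k => k ∉ P) (s j + 1) = j + 1 :=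
          Nat.count_nth_succ_of_infinite hinf j
        have h2 : Nat.count (fun k => k ∉ P) (s j + 1)
            ≤ Nat.count (fun k => k ∉ P) (partDesc P i) :=
          Nat.count_monotone _ h
        omega
    rw [hstep]
    apply Finset.card_bij (fun i _ => partDesc P i)
    · intro a ha
      rw [Finset.mem_filter, Finset.mem_range] at ha
      exact Finset.mem_filter.mpr ⟨partDesc_mem ha.1, ha.2⟩
    · intro a₁ ha₁ a₂ ha₂ h
      rw [Finset.mem_filter, Finset.mem_range] at ha₁ ha₂
      rw [← partDesc_rank ha₁.1, ← partDesc_rank ha₂.1, h]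
    · intro q hq
      rw [Finset.mem_filter] at hq
      refine ⟨(P.filter (fun r => q < r)).card, ?_, partDesc_eq hq.1 rfl⟩
      rw [Finset.mem_filter, Finset.mem_range]
      refine ⟨rank_lt hq.1, ?_⟩
      rw [partDesc_eq hq.1 rfl]
      exact hq.2
  -- s j < m for j ≤ n - 2
  have hs_lt_m : ∀ j, j ≤ n - 2 → s j < m := by
    intro j hj
    apply Nat.nth_lt_of_lt_count
    rw [hcountm]
    omega
  -- first-row hooks
  have hook_row : ∀ j, j ≤ n - 2 → knHook P 0 j = m - s j := by
    intro j hj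
    have hsm := hs_lt_m j hj
    have hA := hcnt (s j)
    rw [hcount_nth] at hA
    -- #(parts > s j) + #(parts < s j) = card P
    have hsp : (P.filter (fun q => q < s j)).card + (P.filter (fun q => s j < q)).card
        = P.card := by
      have h1 := Finset.card_filter_add_card_filter_not
        (s := P) (p := fun q => q < s j)
      have h2 : P.filter (fun q => ¬ q < s j) = P.filter (fun q => s j < q) := by
        apply Finset.filter_congr
        intro q hq
        have : q ≠ s j := fun h => hs_mem j (h ▸ hq)
        simp only [not_lt, eq_iff_iff]
        omega
      rw [h2] at h1
      exact h1
    have hcard' : (P.filter (fun q => q < s j)).card ≤ P.card :=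
      Finset.card_le_card (Finset.filter_subset _ _)
    rw [knHook, hcol, hrow, hpd0, hcountm]
    omega
  -- s z = n - 2
  have hsz : s z = n - 2 := by
    have := hook_row z hz2
    rw [hz] at this
    have := hs_lt_m z hz2
    omega
  -- the complement bijection, part (i)
  constructor
  · intro i hiz
    have hi2 : i < n - 2 := by
      have : s i < s z := hs_mono hiz
      omega
    have hiP : i < P.card := by omega
    have hsi_lt : s i < n - 2 := by
      have : s i < s z := hs_mono hiz
      omega
    rw [hook_col i hiP, hook_row i (by omega)]
    -- show partDesc P i = m - s i
    have htP : m - s i ∈ P := by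
      have := hcompl (m - s i) (by omega) (by omega) (by omega)
      have he : m - (m - s i) = s i := by omega
      rw [he] at this
      exact this.mpr (hs_mem i)
    apply partDesc_eq htP
    have hbij : (P.filter (fun q => m - s i < q)).card
        = ((Finset.range (s i)).filter (fun k => k ∉ P)).card := by
      apply Finset.card_nbij' (i := fun q => m - q) (j := fun v => m - v)
      · intro q hq
        beta_reduce
        rw [Finset.mem_coe, Finset.mem_filter] at hq
        obtain ⟨hqP, hqgt⟩ := hq
        have hq_le : q ≤ m := hleM q hqP
        have hq_ne : q ≠ n - 2 := fun h => hnmem (h ▸ hqP)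
        have hv : m - q ∉ P := (hcompl q (by omega) hq_le hq_ne).mp hqP
        rw [Finset.mem_coe, Finset.mem_filter, Finset.mem_range]
        exact ⟨by omega, hv⟩
      · intro v hv
        beta_reduce
        rw [Finset.mem_coe, Finset.mem_filter, Finset.mem_range] at hv
        obtain ⟨hvlt, hvP⟩ := hv
        have hqP : m - v ∈ P := by
          have := hcompl (m - v) (by omega) (by omega) (by omega)
          have he : m - (m - v) = v := by omega
          rw [he] at this
          exact this.mpr hvP
        rw [Finset.mem_coe, Finset.mem_filter]
        exact ⟨hqP, by omega⟩
      · intro q hq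
        beta_reduce
        rw [Finset.mem_coe, Finset.mem_filter] at hq
        have := hleM q hq.1
        omega
      · intro v hv
        beta_reduce
        rw [Finset.mem_coe, Finset.mem_filter, Finset.mem_range] at hv
        omega
    rw [hbij, ← Nat.count_eq_card_filter_range, hcount_nth]
  -- part (ii)
  · intro i h1 h2
    have hsz_lt : n - 2 < s i := by
      have : s z < s i := hs_mono (by omega)
      omega
    have hsm : s i < m := hs_lt_m i h2
    rw [hook_row i h2]
    have hi1P : i - 1 < P.card := by omega
    rw [hook_col (i - 1) hi1P]
    have htP : m - s i ∈ P := by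
      have := hcompl (m - s i) (by omega) (by omega) (by omega)
      have he : m - (m - s i) = s i := by omega
      rw [he] at this
      exact this.mpr (hs_mem i)
    have hres : partDesc P (i - 1) = m - s i := by
      apply partDesc_eq htP
      have hbij : (P.filter (fun q => m - s i < q)).card
          = (((Finset.range (s i)).filter (fun k => k ∉ P)).erase (n - 2)).card := by
        apply Finset.card_nbij' (i := fun q => m - q) (j := fun v => m - v)
        · intro q hq
          beta_reduce
          rw [Finset.mem_coe, Finset.mem_filter] at hq
          obtain ⟨hqP, hqgt⟩ := hq
          have hq_le : q ≤ m := hleM q hqP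
          have hq_ne : q ≠ n - 2 := fun h => hnmem (h ▸ hqP)
          have hv : m - q ∉ P := (hcompl q (by omega) hq_le hq_ne).mp hqP
          rw [Finset.mem_coe, Finset.mem_erase, Finset.mem_filter, Finset.mem_range]
          exact ⟨by omega, by omega, hv⟩
        · intro v hv
          beta_reduce
          rw [Finset.mem_coe, Finset.mem_erase, Finset.mem_filter, Finset.mem_range] at hv
          obtain ⟨hvne, hvlt, hvP⟩ := hv
          have hqP : m - v ∈ P := by
            have := hcompl (m - v) (by omega) (by omega) (by omega)
            have he : m - (m - v) = v := by omega
            rw [he] at this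
            exact this.mpr hvP
          rw [Finset.mem_coe, Finset.mem_filter]
          exact ⟨hqP, by omega⟩
        · intro q hq
          beta_reduce
          rw [Finset.mem_coe, Finset.mem_filter] at hq
          have := hleM q hq.1
          omega
        · intro v hv
          beta_reduce
          rw [Finset.mem_coe, Finset.mem_erase, Finset.mem_filter, Finset.mem_range] at hv
          omega
      rw [hbij]
      have hmem : n - 2 ∈ (Finset.range (s i)).filter (fun k => k ∉ P) := by
        rw [Finset.mem_filter, Finset.mem_range]
        exact ⟨hsz_lt, hnmem⟩
      rw [Finset.card_erase_of_mem hmem, ← Nat.count_eq_card_filter_range, hcount_nth]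
    rw [hres]
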